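/- Match-distance stability under trajectory perturbation: if L, L' : Fin n → X satisfy d(L i, L' i) ≤ ε for all i, then for all s ≤ e, |matchDist_L(q, s, e) − matchDist_{L'}(q, s, e)| ≤ (2(e − s) + 1)·ε, where matchDist_L uses the places of L. -/

import Mathlib

open Finset

/-- Match distance of the sub-trajectory from place `s` to place `e` of trajectory `L`
with respect to query location `q`. -/
noncomputable def matchDist {X : Type*} [MetricSpace X] (q : X) (L : ℕ → X) (s e : ℕ) : ℝ :=
  min (dist q (L s)) (dist q (L e)) + ∑ i ∈ Finset.Ico s e, dist (L i) (L (i + 1))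

theorem stmt_18 {X : Type*} [MetricSpace X] (n : ℕ) (q : X) (L L' : ℕ → X) (ε : ℝ)
    (hε : 0 ≤ ε) (hLL' : ∀ i, i < n → dist (L i) (L' i) ≤ ε)
    (s e : ℕ) (hse : s ≤ e) (hen : e < n) :
    |matchDist q L s e - matchDist q L' s e| ≤ (2 * (e - s : ℕ) + 1) * ε := by
  have hmin : |min (dist q (L s)) (dist q (L e)) - min (dist q (L' s)) (dist q (L' e))| ≤ ε := by
    have hs : |dist q (L s) - dist q (L' s)| ≤ ε := by
      rw [dist_comm q (L s), dist_comm q (L' s)]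
      exact (abs_dist_sub_le _ _ _).trans (hLL' s (lt_of_le_of_lt hse hen))
    have he : |dist q (L e) - dist q (L' e)| ≤ ε := by
      rw [dist_comm q (L e), dist_comm q (L' e)]
      exact (abs_dist_sub_le _ _ _).trans (hLL' e hen)
    rw [abs_le] at hs he ⊢
    constructor <;> simp only [min_def] <;> split_ifs <;>
      linarith [hs.1, hs.2, he.1, he.2]
  have hsum : |(∑ i ∈ Finset.Ico s e, dist (L i) (L (i + 1))) -
      ∑ i ∈ Finset.Ico s e, dist (L' i) (L' (i + 1))| ≤ (e - s : ℕ) * (2 * ε) := by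
    rw [← Finset.sum_sub_distrib]
    calc |∑ i ∈ Finset.Ico s e, (dist (L i) (L (i + 1)) - dist (L' i) (L' (i + 1)))|
        ≤ ∑ i ∈ Finset.Ico s e, |dist (L i) (L (i + 1)) - dist (L' i) (L' (i + 1))| :=
          Finset.abs_sum_le_sum_abs _ _
      _ ≤ ∑ i ∈ Finset.Ico s e, (2 * ε) := by
          apply Finset.sum_le_sum
          intro i hi
          rw [Finset.mem_Ico] at hi
          have h1 : dist (L i) (L' i) ≤ ε := hLL' i (lt_of_lt_of_le hi.2 hen.le)
          have h2 : dist (L (i+1)) (L' (i+1)) ≤ ε := hLL' (i+1) (Nat.lt_of_le_of_lt hi.2 hen)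
          have t1 := abs_dist_sub_le (L i) (L' i) (L (i+1))
          have t2 := abs_dist_sub_le (L (i+1)) (L' (i+1)) (L' i)
          rw [abs_le] at t1 t2 ⊢
          rw [dist_comm (L (i+1)) (L' i), dist_comm (L' (i+1)) (L' i)] at t2
          constructor <;> [skip; skip] <;>
            [linarith [t1.1, t2.1]; linarith [t1.2, t2.2]]
      _ = (e - s : ℕ) * (2 * ε) := by rw [Finset.sum_const, Nat.card_Ico, nsmul_eq_mul]
  calc |matchDist q L s e - matchDist q L' s e|
      ≤ |min (dist q (L s)) (dist q (L e)) - min (dist q (L' s)) (dist q (L' e))| +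
        |(∑ i ∈ Finset.Ico s e, dist (L i) (L (i + 1))) -
          ∑ i ∈ Finset.Ico s e, dist (L' i) (L' (i + 1))| := by
        unfold matchDist
        have := abs_add_le (min (dist q (L s)) (dist q (L e)) - min (dist q (L' s)) (dist q (L' e)))
          ((∑ i ∈ Finset.Ico s e, dist (L i) (L (i + 1))) - ∑ i ∈ Finset.Ico s e, dist (L' i) (L' (i + 1)))
        convert this using 2
        · rfl
        · rfl
        · ring
    _ ≤ ε + (e - s : ℕ) * (2 * ε) := add_le_add hmin hsum
    _ = (2 * (e - s : ℕ) + 1) * ε := by ring
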